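/- Let V, Q be Hilbert spaces and suppose 𝒜 = [[A, B'],[B, −C]] satisfies: ⟨A·,·⟩ is an inner product on V, ⟨C·,·⟩ is a semi-inner product on Q, B is bounded with constant ζ_∞ and satisfies the inf-sup condition with constant ζ₀ > 0, and the energy norm ⦀(u,p)⦀² = ‖u‖_A² + |p|_B² + |p|_C² makes V × Q a complete normed space. Then for every (f,g) ∈ (V × Q)' the problem 𝒜(u,p) = (f,g) is well-posed: it has a unique solution (u,p), and ⦀(u,p)⦀ ≤ C₀ ‖(f,g)‖_{(V×Q)'} with a constant C₀ depending only on ζ₀. -/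

import Mathlib

private lemma stmt_3_aux_upper (ζ₀ X Y np cpp auvp : ℝ) (hζ₀ : 0 < ζ₀) (hX : 0 ≤ X)
    (hY : 0 ≤ Y) (hnp : 0 ≤ np) (hc : 0 ≤ cpp) (hzy : ζ₀ * Y ≤ np)
    (habs : |auvp| ≤ X * Y) :
    X ^ 2 + 2 * ζ₀ ^ 2 * auvp + ζ₀ ^ 4 * Y ^ 2 + np ^ 2 + cpp
      ≤ (3 + 2 * ζ₀ ^ 2) * (X ^ 2 + np ^ 2 + cpp) := by
  have habs1 : auvp ≤ X * Y := le_trans (le_abs_self _) habs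
  have s1 : 2 * (ζ₀ ^ 2 * (X * Y)) ≤ X ^ 2 + ζ₀ ^ 4 * Y ^ 2 := by
    nlinarith [sq_nonneg (X - ζ₀ ^ 2 * Y)]
  have s2 : ζ₀ ^ 2 * Y ^ 2 ≤ np ^ 2 := by
    nlinarith [mul_le_mul hzy hzy (mul_nonneg hζ₀.le hY) hnp]
  have s3 : ζ₀ ^ 4 * Y ^ 2 ≤ ζ₀ ^ 2 * np ^ 2 := by
    nlinarith [mul_le_mul_of_nonneg_left s2 (sq_nonneg ζ₀)]
  nlinarith [mul_le_mul_of_nonneg_left habs1 (sq_nonneg ζ₀), s1, s3,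
    mul_nonneg (sq_nonneg ζ₀) (sq_nonneg X), mul_nonneg (sq_nonneg ζ₀) hc,
    sq_nonneg X, sq_nonneg np]

private lemma stmt_3_aux_lower (γ ζ₀ X Y np cpp auvp : ℝ) (hζ₀ : 0 < ζ₀) (hX : 0 ≤ X)
    (hY : 0 ≤ Y) (hnp : 0 ≤ np) (hc : 0 ≤ cpp) (hzy : ζ₀ * Y ≤ np)
    (habs : |auvp| ≤ X * Y) (hγ1 : γ ≤ 1 / 2) (hγ2 : γ ≤ ζ₀ ^ 2 / 2) (hγ0 : 0 < γ) :
    γ * (X ^ 2 + np ^ 2 + cpp) ≤ X ^ 2 + ζ₀ ^ 2 * auvp + ζ₀ ^ 2 * np ^ 2 + cpp := by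
  have habs1 : -(X * Y) ≤ auvp := neg_le_of_abs_le habs
  have t1 : -(ζ₀ ^ 2 * (X * Y)) ≤ ζ₀ ^ 2 * auvp := by
    nlinarith [mul_le_mul_of_nonneg_left habs1 (sq_nonneg ζ₀)]
  have t2 : ζ₀ ^ 2 * (X * Y) ≤ ζ₀ * X * np := by
    nlinarith [mul_le_mul_of_nonneg_left hzy (mul_nonneg hζ₀.le hX)]
  have t3 : ζ₀ * X * np ≤ (X ^ 2 + ζ₀ ^ 2 * np ^ 2) / 2 := by
    nlinarith [sq_nonneg (X - ζ₀ * np)]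
  have m1 : γ * X ^ 2 ≤ 1 / 2 * X ^ 2 := mul_le_mul_of_nonneg_right hγ1 (sq_nonneg _)
  have m2 : γ * np ^ 2 ≤ ζ₀ ^ 2 / 2 * np ^ 2 := mul_le_mul_of_nonneg_right hγ2 (sq_nonneg _)
  have m3 : γ * cpp ≤ 1 * cpp := mul_le_mul_of_nonneg_right (by linarith) hc
  nlinarith [t1, t2, t3, m1, m2, m3]

set_option maxHeartbeats 4000000 in
/-- Abstract well-posedness of the perturbed saddle-point problem (Theorem 3.1):
under the assumptions on `A`, `B`, `C` and completeness of `V × Q` in the energy norm,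
for every bounded right-hand side `(f,g)` the problem `𝒜(u,p) = (f,g)` has a unique
solution, with energy norm bounded by `C₀ ‖(f,g)‖`, where `C₀` depends only on `ζ₀`. -/
theorem stmt_3 (ζ₀ : ℝ) (hζ₀ : 0 < ζ₀) :
    ∃ C₀ : ℝ, 0 < C₀ ∧
      ∀ (V Q : Type) [AddCommGroup V] [Module ℝ V] [AddCommGroup Q] [Module ℝ Q]
        (a : V →ₗ[ℝ] V →ₗ[ℝ] ℝ)
        (b : V →ₗ[ℝ] Q →ₗ[ℝ] ℝ)
        (c : Q →ₗ[ℝ] Q →ₗ[ℝ] ℝ)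
        (nB : Seminorm ℝ Q)
        (enormE : V × Q → ℝ),
        (∀ u v : V, a u v = a v u) →
        (∀ u : V, 0 ≤ a u u) →
        (∀ u : V, a u u = 0 → u = 0) →
        (∀ p q : Q, c p q = c q p) →
        (∀ p : Q, 0 ≤ c p p) →
        (∀ w : V × Q, enormE w = Real.sqrt (a w.1 w.1 + (nB w.2) ^ 2 + c w.2 w.2)) →
        -- continuity of B with some constant ζ∞
        (∃ ζinf : ℝ, ∀ (v : V) (p : Q), b v p ≤ ζinf * Real.sqrt (a v v) * nB p) →
        -- inf-sup condition with constant ζ₀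
        (∀ p : Q, ∃ vp : V, b vp p = (nB p) ^ 2 ∧ ζ₀ * Real.sqrt (a vp vp) ≤ nB p) →
        -- the energy expression is a norm
        (∀ w : V × Q, enormE w = 0 → w = 0) →
        -- completeness of V × Q in the energy norm
        (∀ s : ℕ → V × Q,
          (∀ ε > (0 : ℝ), ∃ N, ∀ m ≥ N, ∀ n ≥ N, enormE (s m - s n) < ε) →
          ∃ w : V × Q, ∀ ε > (0 : ℝ), ∃ N, ∀ n ≥ N, enormE (s n - w) < ε) →
        ∀ (f : V →ₗ[ℝ] ℝ) (g : Q →ₗ[ℝ] ℝ) (M : ℝ), 0 ≤ M →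
          (∀ w : V × Q, |f w.1 + g w.2| ≤ M * enormE w) →
          (∃! w : V × Q,
            (∀ v : V, a w.1 v + b v w.2 = f v) ∧
            (∀ q : Q, b w.1 q - c w.2 q = g q)) ∧
          (∀ w : V × Q,
            (∀ v : V, a w.1 v + b v w.2 = f v) →
            (∀ q : Q, b w.1 q - c w.2 q = g q) →
            enormE w ≤ C₀ * M) := by
  classical
  set γ : ℝ := min (1/2) (ζ₀ ^ 2 / 2) with hγdef
  have hγ : 0 < γ := lt_min (by norm_num) (by positivity)
  set K : ℝ := Real.sqrt (3 + 2 * ζ₀ ^ 2) with hKdef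
  have hK2 : K ^ 2 = 3 + 2 * ζ₀ ^ 2 := Real.sq_sqrt (by positivity)
  have hK : 0 < K := Real.sqrt_pos.mpr (by positivity)
  refine ⟨K / γ, div_pos hK hγ, ?_⟩
  intro V Q _ _ _ _ a b c nB enormE hasymm hapos ha0 hcsymm hcpos henorm hcont hinfsup
    hnorm0 hcompl f g M hM hfg
  -- basic fact : nB p = 0 and c p p = 0 imply p = 0
  have hq0 : ∀ p : Q, nB p = 0 → c p p = 0 → p = 0 := by
    intro p h1 h2
    have h3 : enormE ((0 : V), p) = 0 := by
      rw [henorm]; simp [h1, h2]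
    have h4 := hnorm0 _ h3
    exact congrArg Prod.snd h4
  -- the V inner product structure
  letI coreV : InnerProductSpace.Core ℝ V :=
    { inner := fun u v => a u v
      conj_inner_symm := fun u v => by simpa using hasymm v u
      re_inner_nonneg := fun u => by simpa using hapos u
      definite := fun u h => ha0 u (by simpa using h)
      add_left := fun x y z => by simp
      smul_left := fun x y r => by simp }
  letI : NormedAddCommGroup V := coreV.toNormedAddCommGroup
  letI : InnerProductSpace ℝ V := InnerProductSpace.ofCore coreV.toCore
  have hnormV : ∀ v : V, ‖v‖ = Real.sqrt (a v v) := fun v => rfl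
  have hinnerV : ∀ u v : V, (inner ℝ u v : ℝ) = a u v := fun _ _ => rfl
  -- the two-sided continuity bound for b
  obtain ⟨ζi, hζi⟩ := hcont
  set ζ : ℝ := max ζi 1 with hζdef
  have hζ1 : (1:ℝ) ≤ ζ := le_max_right _ _
  have hζpos : 0 < ζ := lt_of_lt_of_le one_pos hζ1
  have hb' : ∀ (v : V) (p : Q), |b v p| ≤ ζ * ‖v‖ * nB p := by
    intro v p
    have h1 : b v p ≤ ζ * ‖v‖ * nB p := by
      refine le_trans (hζi v p) ?_
      rw [hnormV]
      have h2 := apply_nonneg nB p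
      have h3 := Real.sqrt_nonneg (a v v)
      exact mul_le_mul_of_nonneg_right
        (mul_le_mul_of_nonneg_right (le_max_left ζi 1) h3) h2
    have h2 : -(b v p) ≤ ζ * ‖v‖ * nB p := by
      have h3 : b (-v) p ≤ ζi * Real.sqrt (a (-v) (-v)) * nB p := hζi (-v) p
      have h4 : a (-v) (-v) = a v v := by simp
      have h5 : b (-v) p = -(b v p) := by simp
      rw [h4, h5] at h3
      refine le_trans h3 ?_
      rw [hnormV]
      have h6 := apply_nonneg nB p
      have h7 := Real.sqrt_nonneg (a v v)
      exact mul_le_mul_of_nonneg_right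
        (mul_le_mul_of_nonneg_right (le_max_left ζi 1) h7) h6
    exact abs_le.mpr ⟨by linarith, h1⟩
  -- extensionality via a
  have hext : ∀ x y : V, (∀ v : V, a x v = a y v) → x = y := by
    intro x y h
    have h1 : a (x - y) (x - y) = 0 := by
      have h2 := h (x - y)
      have h3 : a (x - y) (x - y) = a x (x - y) - a y (x - y) := by
        simp only [map_sub, LinearMap.sub_apply]
        ring
      rw [h3, h2]; ring
    exact sub_eq_zero.mp (ha0 _ h1)
  -- V is complete
  haveI : CompleteSpace V := by
    apply Metric.complete_of_cauchySeq_tendsto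
    intro s hs
    have hs' := Metric.cauchySeq_iff.mp hs
    have key : ∀ x y : V, enormE ((x, (0:Q)) - (y, 0)) = ‖x - y‖ := by
      intro x y
      rw [Prod.mk_sub_mk, henorm, hnormV]
      simp
    obtain ⟨w, hw⟩ := hcompl (fun n => (s n, 0)) (by
      intro ε hε
      obtain ⟨N, hN⟩ := hs' ε hε
      refine ⟨N, fun m hm n hn => ?_⟩
      show enormE ((s m, (0:Q)) - (s n, 0)) < ε
      rw [key]
      have h1 := hN m hm n hn
      rwa [dist_eq_norm] at h1)
    have hsub : ∀ n : ℕ, ((s n, (0:Q)) - w) = (s n - w.1, -w.2) := by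
      intro n
      have h : ((s n, (0:Q)) - w) = (s n - w.1, (0:Q) - w.2) := rfl
      rw [h, zero_sub]
    have hw2 : w.2 = 0 := by
      have hS : ∀ ε > (0:ℝ), nB w.2 ^ 2 + c w.2 w.2 < ε ^ 2 := by
        intro ε hε
        obtain ⟨N, hN⟩ := hw ε hε
        have h1 := hN N le_rfl
        have h1' : enormE ((s N, (0:Q)) - w) < ε := h1
        rw [hsub, henorm] at h1'
        dsimp only at h1'
        rw [map_neg_eq_map] at h1'
        have h3 : c (-w.2) (-w.2) = c w.2 w.2 := by simp
        rw [h3] at h1'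
        have h4 : (0:ℝ) ≤ a (s N - w.1) (s N - w.1) + nB w.2 ^ 2 + c w.2 w.2 := by
          have := hapos (s N - w.1); have := sq_nonneg (nB w.2); have := hcpos w.2
          linarith
        have h6 : a (s N - w.1) (s N - w.1) + nB w.2 ^ 2 + c w.2 w.2 < ε ^ 2 := by
          nlinarith [Real.sq_sqrt h4,
            Real.sqrt_nonneg (a (s N - w.1) (s N - w.1) + nB w.2 ^ 2 + c w.2 w.2)]
        have := hapos (s N - w.1)
        linarith
      have hS0 : nB w.2 ^ 2 + c w.2 w.2 ≤ 0 := by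
        by_contra h
        push_neg at h
        have := hS (Real.sqrt (nB w.2 ^ 2 + c w.2 w.2)) (Real.sqrt_pos.mpr h)
        rw [Real.sq_sqrt h.le] at this
        exact lt_irrefl _ this
      have hsq : nB w.2 ^ 2 = 0 :=
        le_antisymm (by linarith [hcpos w.2]) (sq_nonneg _)
      have h1 : nB w.2 = 0 := by
        exact (pow_eq_zero_iff two_ne_zero).mp hsq
      have h2 : c w.2 w.2 = 0 :=
        le_antisymm (by linarith [sq_nonneg (nB w.2)]) (hcpos w.2)
      exact hq0 _ h1 h2
    refine ⟨w.1, Metric.tendsto_atTop.mpr ?_⟩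
    intro ε hε
    obtain ⟨N, hN⟩ := hw ε hε
    refine ⟨N, fun n hn => ?_⟩
    have h1 : enormE ((s n, (0:Q)) - w) < ε := hN n hn
    rw [hsub, hw2, henorm] at h1
    dsimp only at h1
    rw [dist_eq_norm, hnormV]
    have h2 : nB (-(0:Q)) = 0 := by simp
    have h3 : c (-(0:Q)) (-(0:Q)) = 0 := by simp
    rw [h2, h3] at h1
    simpa using h1
  -- f is bounded on V
  have hfb : ∀ v : V, |f v| ≤ M * ‖v‖ := by
    intro v
    have h1 := hfg (v, 0)
    simp only [map_zero, add_zero] at h1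
    rw [henorm] at h1
    dsimp only at h1
    rw [hnormV]
    simpa using h1
  set fC : V →L[ℝ] ℝ := LinearMap.mkContinuous f M
    (fun v => by rw [Real.norm_eq_abs]; exact hfb v) with hfCdef
  set uf : V := (InnerProductSpace.toDual ℝ V).symm fC with hufdef
  have huf : ∀ v : V, a uf v = f v := by
    intro v
    have h := InnerProductSpace.toDual_symm_apply (𝕜 := ℝ) (E := V) (x := v) (y := fC)
    rw [hinnerV] at h
    exact h
  -- the lifting operator L : Q → V with a (L p) v = b v p
  have hLfun : ∀ p : Q, ∃ Lp : V, ∀ v : V, a Lp v = b v p := by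
    intro p
    have hbnd : ∀ v : V, ‖b.flip p v‖ ≤ (ζ * nB p) * ‖v‖ := by
      intro v
      rw [Real.norm_eq_abs]
      calc |b v p| ≤ ζ * ‖v‖ * nB p := hb' v p
        _ = (ζ * nB p) * ‖v‖ := by ring
    refine ⟨(InnerProductSpace.toDual ℝ V).symm
      (LinearMap.mkContinuous (b.flip p) (ζ * nB p) hbnd), fun v => ?_⟩
    have h := InnerProductSpace.toDual_symm_apply (𝕜 := ℝ) (E := V) (x := v)
      (y := LinearMap.mkContinuous (b.flip p) (ζ * nB p) hbnd)
    rw [hinnerV] at h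
    exact h
  choose L hL using hLfun
  have hLadd : ∀ p q : Q, L (p + q) = L p + L q := by
    intro p q
    refine hext _ _ fun v => ?_
    rw [hL]
    simp only [map_add, LinearMap.add_apply, hL]
  have hLsmul : ∀ (r : ℝ) (p : Q), L (r • p) = r • L p := by
    intro r p
    refine hext _ _ fun v => ?_
    rw [hL]
    simp only [map_smul, LinearMap.smul_apply, hL, smul_eq_mul]
  set Lm : Q →ₗ[ℝ] V :=
    { toFun := L, map_add' := hLadd, map_smul' := hLsmul } with hLmdef
  have hLm : ∀ (p : Q) (v : V), a (Lm p) v = b v p := hL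
  -- norm bounds for L
  have hLle : ∀ p : Q, ζ₀ * nB p ≤ ‖Lm p‖ := by
    intro p
    rcases eq_or_lt_of_le (apply_nonneg nB p) with h | h
    · rw [← h, mul_zero]; exact norm_nonneg _
    · obtain ⟨vp, hvp1, hvp2⟩ := hinfsup p
      have h1 : nB p ^ 2 = a (Lm p) vp := by rw [hLm, hvp1]
      have h2 : a (Lm p) vp ≤ ‖Lm p‖ * ‖vp‖ := by
        have h3 := real_inner_le_norm (Lm p) vp
        rwa [hinnerV] at h3
      have h3 : ‖vp‖ ≤ nB p / ζ₀ := by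
        rw [hnormV, le_div_iff₀ hζ₀]
        linarith [hvp2]
      have h4 : 0 ≤ ‖Lm p‖ := norm_nonneg _
      have h6 : nB p ^ 2 ≤ ‖Lm p‖ * (nB p / ζ₀) :=
        h1 ▸ le_trans h2 (mul_le_mul_of_nonneg_left h3 h4)
      have h8 : ζ₀ * (‖Lm p‖ * (nB p / ζ₀)) = ‖Lm p‖ * nB p := by
        field_simp
      have h9 := mul_le_mul_of_nonneg_left h6 hζ₀.le
      rw [h8] at h9
      have h7 : (ζ₀ * nB p) * nB p ≤ ‖Lm p‖ * nB p := by linarith [h9]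
      exact le_of_mul_le_mul_right h7 h
  have hLge : ∀ p : Q, ‖Lm p‖ ≤ ζ * nB p := by
    intro p
    rcases eq_or_lt_of_le (norm_nonneg (Lm p)) with h | h
    · rw [← h]; positivity
    · have h1 : ‖Lm p‖ ^ 2 = a (Lm p) (Lm p) := by
        rw [hnormV, Real.sq_sqrt (hapos _)]
      have h2 : a (Lm p) (Lm p) = b (Lm p) p := hLm p (Lm p)
      have h3 : b (Lm p) p ≤ ζ * ‖Lm p‖ * nB p := le_trans (le_abs_self _) (hb' _ _)
      have h4 : ‖Lm p‖ * ‖Lm p‖ ≤ (ζ * nB p) * ‖Lm p‖ := by linarith [h1, h2, h3]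
      exact le_of_mul_le_mul_right h4 h
  -- the Q inner product structure
  letI coreQ : InnerProductSpace.Core ℝ Q :=
    { inner := fun p q => a (Lm p) (Lm q) + c p q
      conj_inner_symm := fun p q => by
        simp only [starRingEnd_apply, star_trivial]
        rw [hasymm (Lm q) (Lm p), hcsymm q p]
      re_inner_nonneg := fun p => by
        simpa using add_nonneg (hapos (Lm p)) (hcpos p)
      definite := fun p h => by
        have h0 : a (Lm p) (Lm p) + c p p = 0 := by simpa using h
        have h1 : a (Lm p) (Lm p) = 0 := by
          have := hapos (Lm p); have := hcpos p; linarith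
        have h2 : c p p = 0 := by
          have := hapos (Lm p); have := hcpos p; linarith
        have h3 : ‖Lm p‖ = 0 := by rw [hnormV, h1, Real.sqrt_zero]
        have h4 : nB p = 0 := by
          have h5 := hLle p
          rw [h3] at h5
          by_contra hne
          have hpos : 0 < nB p := lt_of_le_of_ne (apply_nonneg nB p) (Ne.symm hne)
          have := mul_pos hζ₀ hpos
          linarith
        exact hq0 p h4 h2
      add_left := fun x y z => by
        simp only [map_add, LinearMap.add_apply]
        ring
      smul_left := fun x y r => by
        simp only [map_smul, LinearMap.smul_apply, smul_eq_mul,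
          starRingEnd_apply, star_trivial]
        ring }
  letI : NormedAddCommGroup Q := coreQ.toNormedAddCommGroup
  letI : InnerProductSpace ℝ Q := InnerProductSpace.ofCore coreQ.toCore
  have hnormQ : ∀ p : Q, ‖p‖ = Real.sqrt (a (Lm p) (Lm p) + c p p) := fun _ => rfl
  have hinnerQ : ∀ p q : Q, (inner ℝ p q : ℝ) = a (Lm p) (Lm q) + c p q := fun _ _ => rfl
  -- comparison of the Q norm with the natural seminorm
  set κ : ℝ := max (1/ζ₀) 1 with hκdef
  have hκpos : 0 < κ := lt_of_lt_of_le one_pos (le_max_right _ _)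
  have hQn1 : ∀ q : Q, Real.sqrt (nB q ^ 2 + c q q) ≤ κ * ‖q‖ := by
    intro q
    have h1 : nB q ≤ (1/ζ₀) * ‖Lm q‖ := by
      rw [one_div, inv_mul_eq_div, le_div_iff₀ hζ₀]
      linarith [hLle q]
    have h2 : ‖Lm q‖ ^ 2 = a (Lm q) (Lm q) := by rw [hnormV, Real.sq_sqrt (hapos _)]
    have h3 : nB q ^ 2 + c q q ≤ κ ^ 2 * (a (Lm q) (Lm q) + c q q) := by
      have h4 : (1/ζ₀) ≤ κ := le_max_left _ _
      have h5 : (1:ℝ) ≤ κ := le_max_right _ _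
      have h6 : nB q ^ 2 ≤ (1/ζ₀)^2 * a (Lm q) (Lm q) := by
        rw [← h2]
        have h6' := pow_le_pow_left₀ (apply_nonneg nB q) h1 2
        have h6'' : ((1/ζ₀) * ‖Lm q‖)^2 = (1/ζ₀)^2 * ‖Lm q‖^2 := by ring
        linarith [h6', h6''.le, h6''.ge]
      have h8 : (1/ζ₀)^2 ≤ κ^2 := pow_le_pow_left₀ (by positivity) h4 2
      have h9 : (1/ζ₀)^2 * a (Lm q) (Lm q) ≤ κ^2 * a (Lm q) (Lm q) :=
        mul_le_mul_of_nonneg_right h8 (hapos _)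
      have h10' : (1:ℝ)*1 ≤ κ*κ := mul_le_mul h5 h5 zero_le_one (by linarith)
      have h10 : (1:ℝ) ≤ κ^2 := by linarith [h10']
      have h11 := mul_le_mul_of_nonneg_right h10 (hcpos q)
      have h12 : κ ^ 2 * (a (Lm q) (Lm q) + c q q)
          = κ^2 * a (Lm q) (Lm q) + κ^2 * c q q := by ring
      linarith [h6, h9, h11, h12.le, h12.ge]
    have h8 : κ * ‖q‖ = Real.sqrt (κ ^ 2 * (a (Lm q) (Lm q) + c q q)) := by
      rw [hnormQ, ← Real.sqrt_sq hκpos.le, ← Real.sqrt_mul (sq_nonneg κ)]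
      rw [Real.sqrt_sq hκpos.le]
    rw [h8]
    exact Real.sqrt_le_sqrt h3
  have hQn2 : ∀ q : Q, ‖q‖ ≤ ζ * Real.sqrt (nB q ^ 2 + c q q) := by
    intro q
    have h2 : ‖Lm q‖ ^ 2 = a (Lm q) (Lm q) := by rw [hnormV, Real.sq_sqrt (hapos _)]
    have h3 : a (Lm q) (Lm q) + c q q ≤ ζ ^ 2 * (nB q ^ 2 + c q q) := by
      have h6 : a (Lm q) (Lm q) ≤ ζ ^ 2 * nB q ^ 2 := by
        rw [← h2]
        have h6' := pow_le_pow_left₀ (norm_nonneg (Lm q)) (hLge q) 2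
        have h6'' : (ζ * nB q)^2 = ζ^2 * nB q^2 := by ring
        linarith [h6', h6''.le, h6''.ge]
      have h10' : (1:ℝ)*1 ≤ ζ*ζ := mul_le_mul hζ1 hζ1 zero_le_one (by linarith)
      have h10 : (1:ℝ) ≤ ζ^2 := by linarith [h10']
      have h11 := mul_le_mul_of_nonneg_right h10 (hcpos q)
      have h12 : ζ ^ 2 * (nB q ^ 2 + c q q) = ζ^2 * nB q^2 + ζ^2 * c q q := by ring
      linarith [h6, h11, h12.le, h12.ge]
    have h8 : ζ * Real.sqrt (nB q ^ 2 + c q q) = Real.sqrt (ζ ^ 2 * (nB q ^ 2 + c q q)) := by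
      rw [← Real.sqrt_sq hζpos.le, ← Real.sqrt_mul (sq_nonneg ζ)]
      rw [Real.sqrt_sq hζpos.le]
    rw [hnormQ, h8]
    exact Real.sqrt_le_sqrt h3
  -- Q is complete
  haveI : CompleteSpace Q := by
    apply Metric.complete_of_cauchySeq_tendsto
    intro s hs
    have hs' := Metric.cauchySeq_iff.mp hs
    obtain ⟨w, hw⟩ := hcompl (fun n => ((0:V), s n)) (by
      intro ε hε
      obtain ⟨N, hN⟩ := hs' (ε / κ) (by positivity)
      refine ⟨N, fun m hm n hn => ?_⟩
      show enormE (((0:V), s m) - (0, s n)) < ε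
      have h1 := hN m hm n hn
      rw [dist_eq_norm] at h1
      rw [Prod.mk_sub_mk, henorm]
      dsimp only
      have h3 := hQn1 (s m - s n)
      have h4 : κ * ‖s m - s n‖ < κ * (ε / κ) := mul_lt_mul_of_pos_left h1 hκpos
      rw [mul_div_cancel₀ _ (ne_of_gt hκpos)] at h4
      have h5 : a (0 - 0 : V) (0 - 0 : V) = 0 := by simp
      rw [h5]
      calc Real.sqrt (0 + nB (s m - s n) ^ 2 + c (s m - s n) (s m - s n))
          = Real.sqrt (nB (s m - s n) ^ 2 + c (s m - s n) (s m - s n)) := by rw [zero_add]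
        _ ≤ κ * ‖s m - s n‖ := h3
        _ < ε := by linarith)
    have hsub : ∀ n : ℕ, (((0:V), s n) - w) = (-w.1, s n - w.2) := by
      intro n
      have h : (((0:V), s n) - w) = ((0:V) - w.1, s n - w.2) := rfl
      rw [h, zero_sub]
    have hw1 : w.1 = 0 := by
      have hS : ∀ ε > (0:ℝ), a w.1 w.1 < ε ^ 2 := by
        intro ε hε
        obtain ⟨N, hN⟩ := hw ε hε
        have h1 : enormE (((0:V), s N) - w) < ε := hN N le_rfl
        rw [hsub, henorm] at h1
        dsimp only at h1
        have h2 : a (-w.1) (-w.1) = a w.1 w.1 := by simp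
        rw [h2] at h1
        have hnn : (0:ℝ) ≤ a w.1 w.1 + nB (s N - w.2) ^ 2 + c (s N - w.2) (s N - w.2) := by
          have := hapos w.1; have := sq_nonneg (nB (s N - w.2)); have := hcpos (s N - w.2)
          linarith
        have h6 : a w.1 w.1 + nB (s N - w.2) ^ 2 + c (s N - w.2) (s N - w.2) < ε ^ 2 := by
          nlinarith [Real.sq_sqrt hnn,
            Real.sqrt_nonneg (a w.1 w.1 + nB (s N - w.2) ^ 2 + c (s N - w.2) (s N - w.2))]
        have := sq_nonneg (nB (s N - w.2)); have := hcpos (s N - w.2)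
        linarith
      have hS0 : a w.1 w.1 ≤ 0 := by
        by_contra h
        push_neg at h
        have := hS (Real.sqrt (a w.1 w.1)) (Real.sqrt_pos.mpr h)
        rw [Real.sq_sqrt h.le] at this
        exact lt_irrefl _ this
      exact ha0 _ (le_antisymm hS0 (hapos _))
    refine ⟨w.2, Metric.tendsto_atTop.mpr ?_⟩
    intro ε hε
    obtain ⟨N, hN⟩ := hw (ε / ζ) (by positivity)
    refine ⟨N, fun n hn => ?_⟩
    have h1 : enormE (((0:V), s n) - w) < ε / ζ := hN n hn
    rw [hsub, hw1, henorm] at h1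
    dsimp only at h1
    have h2 : a (-(0:V)) (-(0:V)) = 0 := by simp
    rw [h2, zero_add] at h1
    rw [dist_eq_norm]
    have h3 := hQn2 (s n - w.2)
    calc ‖s n - w.2‖ ≤ ζ * Real.sqrt (nB (s n - w.2) ^ 2 + c (s n - w.2) (s n - w.2)) := h3
      _ < ζ * (ε / ζ) := mul_lt_mul_of_pos_left h1 hζpos
      _ = ε := mul_div_cancel₀ _ (ne_of_gt hζpos)
  -- g is bounded on Q
  have hgb : ∀ q : Q, |g q| ≤ M * κ * ‖q‖ := by
    intro q
    have h1 := hfg ((0:V), q)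
    simp only [map_zero, zero_add] at h1
    rw [henorm] at h1
    dsimp only at h1
    have h2 : a (0:V) 0 = 0 := by simp
    rw [h2, zero_add] at h1
    calc |g q| ≤ M * Real.sqrt (nB q ^ 2 + c q q) := h1
      _ ≤ M * (κ * ‖q‖) := mul_le_mul_of_nonneg_left (hQn1 q) hM
      _ = M * κ * ‖q‖ := by ring
  -- the functional on Q and Riesz representation
  set Fl : Q →ₗ[ℝ] ℝ :=
    { toFun := fun q => a uf (Lm q) - g q
      map_add' := fun x y => by simp only [map_add, LinearMap.add_apply]; ring
      map_smul' := fun r x => by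
        simp only [map_smul, LinearMap.smul_apply, smul_eq_mul, RingHom.id_apply]; ring }
    with hFldef
  have hFb : ∀ q : Q, ‖Fl q‖ ≤ (‖uf‖ + M * κ) * ‖q‖ := by
    intro q
    have h1 : |a uf (Lm q)| ≤ ‖uf‖ * ‖Lm q‖ := by
      have h := abs_real_inner_le_norm uf (Lm q)
      rwa [hinnerV] at h
    have h2 : ‖Lm q‖ ≤ ‖q‖ := by
      rw [hnormV, hnormQ]
      exact Real.sqrt_le_sqrt (by linarith [hcpos q])
    have h3 := hgb q
    rw [Real.norm_eq_abs]
    have h4 : |a uf (Lm q) - g q| ≤ |a uf (Lm q)| + |g q| := by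
      calc |a uf (Lm q) - g q| = |a uf (Lm q) + -(g q)| := by rw [sub_eq_add_neg]
        _ ≤ |a uf (Lm q)| + |-(g q)| := abs_add_le _ _
        _ = |a uf (Lm q)| + |g q| := by rw [abs_neg]
    have h5 : ‖uf‖ * ‖Lm q‖ ≤ ‖uf‖ * ‖q‖ :=
      mul_le_mul_of_nonneg_left h2 (norm_nonneg _)
    show |a uf (Lm q) - g q| ≤ (‖uf‖ + M * κ) * ‖q‖
    calc |a uf (Lm q) - g q| ≤ |a uf (Lm q)| + |g q| := h4
      _ ≤ ‖uf‖ * ‖q‖ + M * κ * ‖q‖ := by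
          have := le_trans h1 h5
          linarith
      _ = (‖uf‖ + M * κ) * ‖q‖ := by ring
  set FC : Q →L[ℝ] ℝ := LinearMap.mkContinuous Fl (‖uf‖ + M * κ) hFb with hFCdef
  set p0 : Q := (InnerProductSpace.toDual ℝ Q).symm FC with hp0def
  have hp0 : ∀ q : Q, a (Lm p0) (Lm q) + c p0 q = a uf (Lm q) - g q := by
    intro q
    have h := InnerProductSpace.toDual_symm_apply (𝕜 := ℝ) (E := Q) (x := q) (y := FC)
    rw [hinnerQ] at h
    exact h
  set u0 : V := uf - Lm p0 with hu0def
  have e1 : ∀ v : V, a u0 v + b v p0 = f v := by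
    intro v
    have h1 : a u0 v = a uf v - a (Lm p0) v := by
      rw [hu0def, map_sub, LinearMap.sub_apply]
    rw [h1, hLm, huf]
    ring
  have e2 : ∀ q : Q, b u0 q - c p0 q = g q := by
    intro q
    have h1 : b u0 q = a (Lm q) u0 := (hLm q u0).symm
    have h2 : a (Lm q) u0 = a (Lm q) uf - a (Lm q) (Lm p0) := by
      rw [hu0def, map_sub]
    have h3 : a (Lm q) uf = a uf (Lm q) := hasymm _ _
    have h4 : a (Lm q) (Lm p0) = a (Lm p0) (Lm q) := hasymm _ _
    have h5 := hp0 q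
    rw [h1, h2, h3, h4]
    linarith
  -- uniqueness
  have huniq : ∀ w' : V × Q,
      ((∀ v : V, a w'.1 v + b v w'.2 = f v) ∧ (∀ q : Q, b w'.1 q - c w'.2 q = g q)) →
      w' = (u0, p0) := by
    rintro ⟨u', p'⟩ ⟨e1', e2'⟩
    have d1 : ∀ v : V, a (u' - u0) v + b v (p' - p0) = 0 := by
      intro v
      have h1 := e1' v; have h2 := e1 v
      have h3 : a (u' - u0) v = a u' v - a u0 v := by rw [map_sub, LinearMap.sub_apply]
      have h4 : b v (p' - p0) = b v p' - b v p0 := by rw [map_sub]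
      rw [h3, h4]
      dsimp only at h1
      linarith
    have d2 : ∀ q : Q, b (u' - u0) q - c (p' - p0) q = 0 := by
      intro q
      have h1 := e2' q; have h2 := e2 q
      have h3 : b (u' - u0) q = b u' q - b u0 q := by rw [map_sub, LinearMap.sub_apply]
      have h4 : c (p' - p0) q = c p' q - c p0 q := by rw [map_sub, LinearMap.sub_apply]
      rw [h3, h4]
      dsimp only at h1
      linarith
    have h5 := d1 (u' - u0)
    have h6 := d2 (p' - p0)
    have h7 : a (u' - u0) (u' - u0) = 0 := by
      have := hapos (u' - u0); have := hcpos (p' - p0); linarith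
    have hdu : u' - u0 = 0 := ha0 _ h7
    have h8 : c (p' - p0) (p' - p0) = 0 := by
      have := hapos (u' - u0); have := hcpos (p' - p0); linarith
    have h9 : ∀ v : V, b v (p' - p0) = 0 := by
      intro v
      have h10 := d1 v
      rw [hdu] at h10
      simpa using h10
    obtain ⟨vp, hvp1, hvp2⟩ := hinfsup (p' - p0)
    have h10 : nB (p' - p0) ^ 2 = 0 := by rw [← hvp1]; exact h9 vp
    have h11 : nB (p' - p0) = 0 := (pow_eq_zero_iff two_ne_zero).mp h10
    have hdp : p' - p0 = 0 := hq0 _ h11 h8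
    exact Prod.ext (sub_eq_zero.mp hdu) (sub_eq_zero.mp hdp)
  -- the stability bound (holds for any solution, purely algebraically)
  have bound : ∀ w : V × Q, (∀ v : V, a w.1 v + b v w.2 = f v) →
      (∀ q : Q, b w.1 q - c w.2 q = g q) → enormE w ≤ K / γ * M := by
    rintro ⟨u, p⟩ e1' e2'
    dsimp only at e1' e2'
    obtain ⟨vp, hvp1, hvp2⟩ := hinfsup p
    have hau : 0 ≤ a u u := hapos u
    have hnp : 0 ≤ nB p := apply_nonneg nB p
    have hcp : 0 ≤ c p p := hcpos p
    have havp : 0 ≤ a vp vp := hapos vp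
    set X := Real.sqrt (a u u) with hXdef
    have hX2 : X ^ 2 = a u u := Real.sq_sqrt hau
    have hXnn : 0 ≤ X := Real.sqrt_nonneg _
    set Y := Real.sqrt (a vp vp) with hYdef
    have hY2 : Y ^ 2 = a vp vp := Real.sq_sqrt havp
    have hYnn : 0 ≤ Y := Real.sqrt_nonneg _
    have hzy : ζ₀ * Y ≤ nB p := hvp2
    have hCS : |a u vp| ≤ X * Y := by
      have h := abs_real_inner_le_norm u vp
      rw [hinnerV, hnormV, hnormV] at h
      exact h
    set t1 : V := u + (ζ₀ ^ 2) • vp with ht1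
    have hS : f t1 + g (-p) = a u u + ζ₀^2 * a u vp + ζ₀^2 * nB p ^ 2 + c p p := by
      have h1 := e1' t1
      have h2 := e2' (-p)
      have h3 : a u t1 = a u u + ζ₀^2 * a u vp := by
        rw [ht1, map_add, map_smul, smul_eq_mul]
      have h4 : b t1 p = b u p + ζ₀^2 * nB p ^ 2 := by
        rw [ht1, map_add, LinearMap.add_apply, map_smul, LinearMap.smul_apply,
          smul_eq_mul, hvp1]
      have h5 : b u (-p) = -(b u p) := by simp
      have h6 : c p (-p) = -(c p p) := by simp
      rw [h5, h6] at h2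
      rw [h3, h4] at h1
      linarith
    have hfg' : |f t1 + g (-p)| ≤ M * enormE (t1, -p) := hfg (t1, -p)
    have het : enormE (t1, -p) = Real.sqrt (a t1 t1 + nB p ^ 2 + c p p) := by
      rw [henorm]
      dsimp only
      rw [map_neg_eq_map]
      have h3 : c (-p) (-p) = c p p := by simp
      rw [h3]
    have hew : enormE (u, p) = Real.sqrt (a u u + nB p ^ 2 + c p p) := by
      rw [henorm]
    set E := Real.sqrt (a u u + nB p ^ 2 + c p p) with hEdef
    have hE2 : E ^ 2 = a u u + nB p ^ 2 + c p p :=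
      Real.sq_sqrt (by linarith [hau, sq_nonneg (nB p), hcp])
    have hEnn : 0 ≤ E := Real.sqrt_nonneg _
    have ht1t1 : a t1 t1 = a u u + 2 * ζ₀^2 * a u vp + ζ₀^4 * a vp vp := by
      rw [ht1]
      simp only [map_add, map_smul, LinearMap.add_apply, LinearMap.smul_apply, smul_eq_mul]
      rw [hasymm vp u]
      ring
    have hupper : a t1 t1 + nB p ^ 2 + c p p ≤ K^2 * E^2 := by
      rw [hE2, hK2, ht1t1, ← hX2, ← hY2]
      exact stmt_3_aux_upper ζ₀ X Y (nB p) (c p p) (a u vp) hζ₀ hXnn hYnn hnp hcp hzy hCS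
    have hetle : enormE (t1, -p) ≤ K * E := by
      rw [het]
      have h : K * E = Real.sqrt (K^2 * E^2) := by
        rw [← Real.sqrt_sq hK.le, ← Real.sqrt_sq hEnn, ← Real.sqrt_mul (sq_nonneg K),
          Real.sqrt_sq hK.le, Real.sqrt_sq hEnn]
      rw [h]
      exact Real.sqrt_le_sqrt hupper
    have hlow : γ * E^2 ≤ f t1 + g (-p) := by
      rw [hS, hE2, ← hX2]
      exact stmt_3_aux_lower γ ζ₀ X Y (nB p) (c p p) (a u vp) hζ₀ hXnn hYnn hnp hcp hzy hCS
        (min_le_left _ _) (min_le_right _ _) hγ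
    have hfin : γ * E^2 ≤ M * (K * E) := by
      calc γ * E^2 ≤ f t1 + g (-p) := hlow
        _ ≤ |f t1 + g (-p)| := le_abs_self _
        _ ≤ M * enormE (t1, -p) := hfg'
        _ ≤ M * (K * E) := mul_le_mul_of_nonneg_left hetle hM
    show enormE (u, p) ≤ K / γ * M
    rw [hew]
    rcases eq_or_lt_of_le hEnn with h | h
    · rw [← h]
      exact mul_nonneg (div_pos hK hγ).le hM
    · rw [div_mul_eq_mul_div, le_div_iff₀ hγ]
      have h2 : (γ*E)*E ≤ (M*K)*E := by linarith [hfin]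
      have h3 := le_of_mul_le_mul_right h2 h
      linarith [h3]
  exact ⟨⟨(u0, p0), ⟨e1, e2⟩, fun y hy => huniq y hy⟩, bound⟩
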